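/- Let N ≥ 2 be an integer, and let u : (0,1] → ℝ be C¹ with u′ locally absolutely continuous on (0,1], satisfying u″(r) + ((N−1)/r) u′(r) + sgn(u(r)) = 0 for almost every r ∈ (0,1]. Then the function h : (0,1] → ℝ, h(r) = u′(r)²/2 + |u(r)|, is nonincreasing on (0,1]. -/

import Mathlib

open MeasureTheory Set

/-- A set of reals all of whose points are isolated is countable. -/
private lemma countable_isolated {s : Set ℝ}
    (h : ∀ x ∈ s, ∃ ε > (0:ℝ), ∀ y ∈ s, |y - x| < ε → y = x) : s.Countable := by
  have hchoice : ∀ x ∈ s, ∃ p : ℚ × ℚ, (p.1 : ℝ) < x ∧ x < p.2 ∧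
      ∀ y ∈ s, (p.1 : ℝ) < y → y < (p.2 : ℝ) → y = x := by
    intro x hx
    obtain ⟨ε, hε, hsep⟩ := h x hx
    obtain ⟨q1, hq1, hq1'⟩ := exists_rat_btwn (show x - ε < x by linarith)
    obtain ⟨q2, hq2, hq2'⟩ := exists_rat_btwn (show x < x + ε by linarith)
    exact ⟨(q1, q2), hq1', hq2, fun y hy h1 h2 =>
      hsep y hy (abs_sub_lt_iff.2 ⟨by linarith, by linarith⟩)⟩
  choose! f hf1 hf2 hf3 using hchoice
  refine countable_of_injective_of_countable_image (f := f) ?_ (Set.to_countable _)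
  intro x hx y hy hxy
  have h1 : ((f x).1 : ℝ) < y := by rw [hxy]; exact hf1 y hy
  have h2 : y < ((f x).2 : ℝ) := by rw [hxy]; exact hf2 y hy
  exact (hf3 x hx y hy h1 h2).symm

/-- Fubini identity: if `f` is integrable on `(a,b]` then
`∫ f(x) F(x) = (∫ f)² / 2` where `F(x) = ∫_{(a,x]} f`. -/
private lemma fubini_sq {a b : ℝ} {f : ℝ → ℝ} (hf : IntegrableOn f (Ioc a b)) :
    (∫ x in Ioc a b, f x * ∫ t in Ioc a x, f t) = (∫ t in Ioc a b, f t) ^ 2 / 2 ∧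
      IntegrableOn (fun x => f x * ∫ t in Ioc a x, f t) (Ioc a b) := by
  set ν := volume.restrict (Ioc a b) with hν
  set I := ∫ t in Ioc a b, f t with hI
  have hmeas : MeasurableSet {p : ℝ × ℝ | p.2 ≤ p.1} :=
    measurableSet_le measurable_snd measurable_fst
  have hprod : Integrable ({p : ℝ × ℝ | p.2 ≤ p.1}.indicator (fun q => f q.1 * f q.2))
      (ν.prod ν) := (hf.mul_prod hf).indicator hmeas
  -- pointwise identification of the inner integral, for x ∈ Ioc a b
  have hinner : ∀ x ∈ Ioc a b,
      (∫ t, {p : ℝ × ℝ | p.2 ≤ p.1}.indicator (fun q => f q.1 * f q.2) (x, t) ∂ν)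
        = f x * ∫ t in Ioc a x, f t := by
    intro x hx
    have heq : (fun t => {p : ℝ × ℝ | p.2 ≤ p.1}.indicator (fun q => f q.1 * f q.2) (x, t))
        = (Iic x).indicator (fun t => f x * f t) := by
      funext t
      by_cases h : t ≤ x
      · rw [Set.indicator_of_mem (show (x, t) ∈ {p : ℝ × ℝ | p.2 ≤ p.1} from h),
          Set.indicator_of_mem (show t ∈ Iic x from h)]
      · rw [Set.indicator_of_notMem (show (x, t) ∉ {p : ℝ × ℝ | p.2 ≤ p.1} from h),
          Set.indicator_of_notMem (show t ∉ Iic x from h)]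
    rw [heq, integral_indicator measurableSet_Iic, hν,
      Measure.restrict_restrict measurableSet_Iic]
    have hset : Iic x ∩ Ioc a b = Ioc a x := by
      ext t
      simp only [mem_inter_iff, mem_Iic, mem_Ioc]
      exact ⟨fun ⟨h1, h2, h3⟩ => ⟨h2, h1⟩, fun ⟨h1, h2⟩ => ⟨h2, h1, h2.trans hx.2⟩⟩
    rw [hset, integral_const_mul]
  -- pointwise identification of the swapped inner integral, for t ∈ Ioc a b
  have houter : ∀ t ∈ Ioc a b,
      (∫ x, {p : ℝ × ℝ | p.2 ≤ p.1}.indicator (fun q => f q.1 * f q.2) (x, t) ∂ν)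
        = f t * (I - ∫ s in Ioc a t, f s) := by
    intro t ht
    have heq : (fun x => {p : ℝ × ℝ | p.2 ≤ p.1}.indicator (fun q => f q.1 * f q.2) (x, t))
        = (Ici t).indicator (fun x => f x * f t) := by
      funext x
      by_cases h : t ≤ x
      · rw [Set.indicator_of_mem (show (x, t) ∈ {p : ℝ × ℝ | p.2 ≤ p.1} from h),
          Set.indicator_of_mem (show x ∈ Ici t from h)]
      · rw [Set.indicator_of_notMem (show (x, t) ∉ {p : ℝ × ℝ | p.2 ≤ p.1} from h),
          Set.indicator_of_notMem (show x ∉ Ici t from h)]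
    rw [heq, integral_indicator measurableSet_Ici, hν,
      Measure.restrict_restrict measurableSet_Ici]
    have hset : Ici t ∩ Ioc a b = Icc t b := by
      ext x
      simp only [mem_inter_iff, mem_Ici, mem_Icc, mem_Ioc]
      exact ⟨fun ⟨h1, h2, h3⟩ => ⟨h1, h3⟩, fun ⟨h1, h2⟩ => ⟨h1, ht.1.trans_le h1, h2⟩⟩
    have hsplit : I = (∫ s in Ioc a t, f s) + ∫ s in Ioc t b, f s := by
      rw [hI, ← Set.Ioc_union_Ioc_eq_Ioc ht.1.le ht.2,
        setIntegral_union (Set.Ioc_disjoint_Ioc_of_le le_rfl) measurableSet_Ioc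
          (hf.mono_set (Set.Ioc_subset_Ioc_right ht.2))
          (hf.mono_set (Set.Ioc_subset_Ioc_left ht.1.le))]
    rw [hset, integral_Icc_eq_integral_Ioc]
    rw [integral_mul_const]
    have : (∫ x in Ioc t b, f x) = I - ∫ s in Ioc a t, f s := by linarith
    rw [this]; ring
  -- integrability of x ↦ f x * F x
  have hmarg : Integrable (fun x => ∫ t, {p : ℝ × ℝ | p.2 ≤ p.1}.indicator
      (fun q => f q.1 * f q.2) (x, t) ∂ν) ν := hprod.integral_prod_left
  have hintfF : IntegrableOn (fun x => f x * ∫ t in Ioc a x, f t) (Ioc a b) := by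
    refine (hmarg.congr ?_)
    refine (ae_restrict_iff' measurableSet_Ioc).2 (Filter.Eventually.of_forall ?_)
    exact fun x hx => hinner x hx
  refine ⟨?_, hintfF⟩
  have hswap := integral_integral_swap (f := fun x t =>
    {p : ℝ × ℝ | p.2 ≤ p.1}.indicator (fun q => f q.1 * f q.2) (x, t)) hprod
  have hL : (∫ x, ∫ t, {p : ℝ × ℝ | p.2 ≤ p.1}.indicator (fun q => f q.1 * f q.2) (x, t) ∂ν ∂ν)
      = ∫ x in Ioc a b, f x * ∫ t in Ioc a x, f t := by
    exact setIntegral_congr_fun measurableSet_Ioc fun x hx => hinner x hx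
  have hR : (∫ t, ∫ x, {p : ℝ × ℝ | p.2 ≤ p.1}.indicator (fun q => f q.1 * f q.2) (x, t) ∂ν ∂ν)
      = ∫ t in Ioc a b, f t * (I - ∫ s in Ioc a t, f s) := by
    exact setIntegral_congr_fun measurableSet_Ioc fun t ht => houter t ht
  have hRsplit : (∫ t in Ioc a b, f t * (I - ∫ s in Ioc a t, f s))
      = I * I - ∫ t in Ioc a b, f t * ∫ s in Ioc a t, f s := by
    have h1 : (fun t => f t * (I - ∫ s in Ioc a t, f s))
        = fun t => f t * I - f t * ∫ s in Ioc a t, f s := by funext t; ring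
    rw [h1, integral_sub (hf.mul_const I) hintfF, integral_mul_const, hI]
  have hfin : (∫ x in Ioc a b, f x * ∫ t in Ioc a x, f t)
      = I * I - ∫ t in Ioc a b, f t * ∫ s in Ioc a t, f s :=
    hL.symm.trans (hswap.trans (hR.trans hRsplit))
  rw [pow_two]
  linarith [hfin]

/-- For a `C¹` function `u` on `(0,1]` whose derivative `u'` is locally
absolutely continuous (with a.e. derivative `u''`, locally integrable up to `1`) and which
satisfies `u'' + ((N-1)/r)u' + sgn(u) = 0` a.e. on `(0,1]`, the energy
`h(r) = u'(r)²/2 + |u(r)|` is nonincreasing on `(0,1]`. -/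
theorem statement13 (N : ℕ) (hN : 2 ≤ N) (u u' u'' : ℝ → ℝ)
    (hu' : ∀ r ∈ Ioc (0 : ℝ) 1, HasDerivWithinAt u (u' r) (Ioc 0 1) r)
    (hu'c : ContinuousOn u' (Ioc 0 1))
    (hu''int : ∀ a : ℝ, 0 < a → IntegrableOn u'' (Icc a 1))
    (hAC : ∀ a b : ℝ, 0 < a → a ≤ b → b ≤ 1 → u' b - u' a = ∫ t in a..b, u'' t)
    (hode : ∀ᵐ r ∂(volume.restrict (Ioc (0 : ℝ) 1)),
      u'' r + (((N : ℝ) - 1) / r) * u' r + Real.sign (u r) = 0) :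
    AntitoneOn (fun r => u' r ^ 2 / 2 + |u r|) (Ioc (0 : ℝ) 1) := by
  intro a ha b hb hab
  obtain ⟨ha0, ha1⟩ := ha
  obtain ⟨hb0, hb1⟩ := hb
  simp only
  have hIab : Ioc a b ⊆ Ioc (0:ℝ) 1 := fun x hx => ⟨ha0.trans hx.1, hx.2.trans hb1⟩
  have hIcc : Icc a b ⊆ Ioc (0:ℝ) 1 := fun x hx => ⟨ha0.trans_le hx.1, hx.2.trans hb1⟩
  have ucont : ContinuousOn u (Ioc 0 1) := fun r hr => (hu' r hr).continuousWithinAt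
  have msign : Measurable Real.sign := by
    have : Real.sign = fun r : ℝ => if r < 0 then (-1:ℝ) else if 0 < r then 1 else 0 := by
      funext r; rfl
    rw [this]
    exact Measurable.ite measurableSet_Iio measurable_const
      (Measurable.ite measurableSet_Ioi measurable_const measurable_const)
  have habs_sign : ∀ y : ℝ, |Real.sign y| ≤ 1 := by
    intro y
    rcases Real.sign_apply_eq y with h | h | h <;> rw [h] <;> norm_num
  -- integrability facts on (a, b]
  have hu''ab : IntegrableOn u'' (Ioc a b) :=
    (hu''int a ha0).mono_set (fun x hx => ⟨hx.1.le, hx.2.trans hb1⟩)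
  have hu'aesm : AEStronglyMeasurable u' (volume.restrict (Ioc a b)) :=
    (hu'c.mono hIab).aestronglyMeasurable measurableSet_Ioc
  have huaem : AEMeasurable u (volume.restrict (Ioc a b)) :=
    ((ucont.mono hIab).aemeasurable measurableSet_Ioc)
  obtain ⟨C, hC⟩ := IsCompact.exists_bound_of_continuousOn isCompact_Icc (hu'c.mono hIcc)
  have hu'int : IntegrableOn u' (Ioc a b) :=
    ((hu'c.mono hIcc).integrableOn_Icc).mono_set Ioc_subset_Icc_self
  have hint1 : IntegrableOn (fun x => u' x * u'' x) (Ioc a b) := by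
    refine Integrable.mono' (hu''ab.norm.const_mul C) (hu'aesm.mul hu''ab.1) ?_
    filter_upwards [ae_restrict_mem measurableSet_Ioc] with x hx
    rw [norm_mul]
    exact mul_le_mul_of_nonneg_right (hC x (Ioc_subset_Icc_self hx)) (norm_nonneg _)
  have hint2 : IntegrableOn (fun x => Real.sign (u x) * u' x) (Ioc a b) := by
    refine Integrable.mono' hu'int.norm
      (((msign.comp_aemeasurable huaem).mul hu'aesm.aemeasurable).aestronglyMeasurable) ?_
    filter_upwards with x
    rw [norm_mul]
    calc ‖Real.sign (u x)‖ * ‖u' x‖ ≤ 1 * ‖u' x‖ :=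
          mul_le_mul_of_nonneg_right (habs_sign _) (norm_nonneg _)
      _ = ‖u' x‖ := one_mul _
  -- STEP A : kinetic energy
  set c := u' a with hc
  set I := ∫ t in Ioc a b, u'' t with hI
  have hub : u' b = c + I := by
    have h := hAC a b ha0 hab hb1
    rw [intervalIntegral.integral_of_le hab] at h
    linarith
  have hux : ∀ x ∈ Ioc a b, u' x - c = ∫ t in Ioc a x, u'' t := by
    intro x hx
    have h := hAC a x ha0 hx.1.le (hx.2.trans hb1)
    rw [intervalIntegral.integral_of_le hx.1.le] at h
    linarith
  obtain ⟨hfub, hfubint⟩ := fubini_sq hu''ab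
  have hkey : ∫ x in Ioc a b, (u' x - c) * u'' x = I ^ 2 / 2 := by
    rw [← hfub]
    refine setIntegral_congr_fun measurableSet_Ioc fun x hx => ?_
    rw [hux x hx]; ring
  have hintsub : IntegrableOn (fun x => (u' x - c) * u'' x) (Ioc a b) := by
    have : (fun x => (u' x - c) * u'' x) = fun x => u' x * u'' x - c * u'' x := by
      funext x; ring
    rw [this]
    exact hint1.sub (hu''ab.const_mul c)
  have hstepA : ∫ x in Ioc a b, u' x * u'' x = u' b ^ 2 / 2 - u' a ^ 2 / 2 := by
    have h1 : (fun x => u' x * u'' x) = fun x => (u' x - c) * u'' x + c * u'' x := by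
      funext x; ring
    rw [h1, integral_add hintsub (hu''ab.const_mul c), hkey, integral_const_mul, ← hI, hub, ← hc]
    ring
  -- STEP B : potential energy |u|
  set g : ℝ → ℝ := fun x => if u x = 0 then |u' x| else Real.sign (u x) * u' x with hg
  -- the exceptional set
  set D : Set ℝ := {x | x ∈ Ioc a b ∧ u x = 0 ∧ u' x ≠ 0} with hD
  have hDcount : D.Countable := by
    apply countable_isolated
    rintro x ⟨hxab, hux0, hux'⟩
    have hx01 : x ∈ Ioc (0:ℝ) 1 := hIab hxab
    have hslope : Filter.Tendsto (slope u x) (nhdsWithin x (Ioc (0:ℝ) 1 \ {x}))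
        (nhds (u' x)) := hasDerivWithinAt_iff_tendsto_slope.1 (hu' x hx01)
    have hne : ∀ᶠ y in nhdsWithin x (Ioc (0:ℝ) 1 \ {x}), slope u x y ≠ 0 :=
      hslope.eventually_ne hux'
    rw [eventually_nhdsWithin_iff] at hne
    rw [Metric.eventually_nhds_iff] at hne
    obtain ⟨ε, hε, hball⟩ := hne
    refine ⟨ε, hε, ?_⟩
    rintro y ⟨hyab, huy0, _⟩ hdist
    by_contra hyx
    have hy01 : y ∈ Ioc (0:ℝ) 1 := hIab hyab
    have := hball (show dist y x < ε by rwa [Real.dist_eq]) ⟨hy01, hyx⟩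
    apply this
    rw [slope_def_field, hux0, huy0]
    simp
  have hDnull : volume D = 0 := hDcount.measure_zero volume
  have hgae : ∀ᵐ x ∂(volume.restrict (Ioc a b)), g x = Real.sign (u x) * u' x := by
    refine (ae_restrict_iff' measurableSet_Ioc).2 ?_
    have hDae : ∀ᵐ x ∂(volume : Measure ℝ), x ∉ D := measure_eq_zero_iff_ae_notMem.1 hDnull
    filter_upwards [hDae] with x hxD hxab
    by_cases hu0 : u x = 0
    · have hu'0 : u' x = 0 := by
        by_contra h
        exact hxD ⟨hxab, hu0, h⟩
      rw [hg]
      simp [hu0, hu'0]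
    · rw [hg]; simp only [if_neg hu0]
  have hgint : IntervalIntegrable g volume a b := by
    rw [intervalIntegrable_iff_integrableOn_Ioc_of_le hab]
    exact hint2.congr (hgae.mono fun x hx => hx.symm)
  have hderiv : ∀ x ∈ Ioo a b, HasDerivWithinAt (fun y => |u y|) (g x) (Ioi x) x := by
    intro x hx
    have hx01 : x ∈ Ioc (0:ℝ) 1 := ⟨ha0.trans hx.1, hx.2.le.trans hb1⟩
    have hmem : Ioc (0:ℝ) 1 ∈ nhds x :=
      Ioc_mem_nhds (ha0.trans hx.1) (hx.2.trans_le hb1)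
    have hd : HasDerivAt u (u' x) x := (hu' x hx01).hasDerivAt hmem
    rcases lt_trichotomy (u x) 0 with huneg | hu0 | hupos
    · -- u x < 0 : |u| = -u near x
      have hev : ∀ᶠ y in nhds x, u y < 0 :=
        hd.continuousAt.preimage_mem_nhds (Iio_mem_nhds huneg)
      have heq : (fun y => |u y|) =ᶠ[nhds x] fun y => -u y := by
        filter_upwards [hev] with y hy
        rw [abs_of_neg hy]
      have : HasDerivAt (fun y => |u y|) (-u' x) x :=
        HasDerivAt.congr_of_eventuallyEq hd.neg heq
      have hgx : g x = -u' x := by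
        rw [hg]
        simp only [if_neg (ne_of_lt huneg), Real.sign_of_neg huneg]
        ring
      rw [hgx]
      exact this.hasDerivWithinAt
    · -- u x = 0 : right derivative of |u| is |u' x|
      have hgx : g x = |u' x| := by rw [hg]; simp only [if_pos hu0]
      rw [hgx]
      rw [hasDerivWithinAt_iff_tendsto_slope]
      have hslope : Filter.Tendsto (slope u x) (nhdsWithin x (Ioi x \ {x}))
          (nhds (u' x)) :=
        hasDerivWithinAt_iff_tendsto_slope.1 hd.hasDerivWithinAt
      have habs : Filter.Tendsto (fun y => |slope u x y|) (nhdsWithin x (Ioi x \ {x}))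
          (nhds |u' x|) := (continuous_abs.continuousAt).tendsto.comp hslope
      refine habs.congr' ?_
      filter_upwards [self_mem_nhdsWithin] with y hy
      obtain ⟨hyIoi, -⟩ := hy
      have hyx : (0:ℝ) < y - x := sub_pos.2 hyIoi
      rw [slope_def_field, slope_def_field, hu0, sub_zero, abs_zero, sub_zero,
        div_eq_mul_inv, div_eq_mul_inv, abs_mul, abs_inv, abs_of_pos hyx]
    · -- u x > 0 : |u| = u near x
      have hev : ∀ᶠ y in nhds x, 0 < u y :=
        hd.continuousAt.preimage_mem_nhds (Ioi_mem_nhds hupos)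
      have heq : (fun y => |u y|) =ᶠ[nhds x] u := by
        filter_upwards [hev] with y hy
        rw [abs_of_pos hy]
      have : HasDerivAt (fun y => |u y|) (u' x) x :=
        HasDerivAt.congr_of_eventuallyEq hd heq
      have hgx : g x = u' x := by
        rw [hg]
        simp only [if_neg (ne_of_gt hupos), Real.sign_of_pos hupos, one_mul]
      rw [hgx]
      exact this.hasDerivWithinAt
  have hcontabs : ContinuousOn (fun y => |u y|) (Icc a b) :=
    continuous_abs.comp_continuousOn (ucont.mono hIcc)
  have hftc := intervalIntegral.integral_eq_sub_of_hasDeriv_right_of_le hab hcontabs hderiv hgint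
  have hstepB : ∫ x in Ioc a b, Real.sign (u x) * u' x = |u b| - |u a| := by
    rw [← integral_congr_ae hgae]
    rw [intervalIntegral.integral_of_le hab] at hftc
    exact hftc
  -- STEP C : combine using the ODE
  have hodeab : ∀ᵐ x ∂(volume.restrict (Ioc a b)),
      u'' x + (((N : ℝ) - 1) / x) * u' x + Real.sign (u x) = 0 :=
    ae_restrict_of_ae_restrict_of_subset hIab hode
  have hcongr : ∫ x in Ioc a b, (u' x * u'' x + Real.sign (u x) * u' x)
      = ∫ x in Ioc a b, -((((N : ℝ) - 1) / x) * u' x ^ 2) := by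
    refine integral_congr_ae ?_
    filter_upwards [hodeab] with x hx
    have h1 : u'' x = -(((N : ℝ) - 1) / x) * u' x - Real.sign (u x) := by linarith
    rw [h1]; ring
  have hneg : ∫ x in Ioc a b, -((((N : ℝ) - 1) / x) * u' x ^ 2) ≤ 0 := by
    refine setIntegral_nonpos measurableSet_Ioc fun x hx => ?_
    have hx0 : 0 < x := ha0.trans hx.1
    have hN1 : (0:ℝ) ≤ (N : ℝ) - 1 := by
      have : (2:ℝ) ≤ (N : ℝ) := by exact_mod_cast hN
      linarith
    have : 0 ≤ (((N : ℝ) - 1) / x) * u' x ^ 2 :=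
      mul_nonneg (div_nonneg hN1 hx0.le) (sq_nonneg _)
    linarith
  have hsum : ∫ x in Ioc a b, (u' x * u'' x + Real.sign (u x) * u' x)
      = (∫ x in Ioc a b, u' x * u'' x) + ∫ x in Ioc a b, Real.sign (u x) * u' x :=
    integral_add hint1 hint2
  rw [hcongr] at hsum
  rw [hstepA, hstepB] at hsum
  linarith [hneg, hsum]
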